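/- Let p be an odd prime, G a finite p-group, and k ≥ 0. Then η_{k+1}(G)/(η_{k+1}(G)^p η_k(G)) = Z(G/(η_{k+1}(G)^p η_k(G))), where Z denotes the center. -/

import Mathlib

/-- The subgroup generated by `p`-th powers of elements of `N`. -/
def pPow {G : Type*} [Group G] (p : ℕ) (N : Subgroup G) : Subgroup G :=
  Subgroup.closure ((fun x => x ^ p) '' (N : Set G))

theorem pPow_normal {G : Type*} [Group G] (p : ℕ) {N : Subgroup G} (hN : N.Normal) :
    (pPow p N).Normal := by
  constructor
  intro x hx g
  have h : pPow p N ≤ Subgroup.comap (MulAut.conj g).toMonoidHom (pPow p N) := by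
    rw [pPow, Subgroup.closure_le]
    rintro - ⟨n, hn, rfl⟩
    have : (MulAut.conj g) (n ^ p) = (g * n * g⁻¹) ^ p := by
      simp [MulAut.conj_apply, conj_pow]
    refine Subgroup.mem_comap.2 ?_
    show (MulAut.conj g) (n ^ p) ∈ _
    rw [this]
    exact Subgroup.subset_closure ⟨g * n * g⁻¹, hN.conj_mem n hn g, rfl⟩
  simpa using h hx

theorem normal_sSup {G : Type*} [Group G] {S : Set (Subgroup G)}
    (hS : ∀ N ∈ S, N.Normal) : (sSup S).Normal := by
  constructor
  intro x hx g
  have h : sSup S ≤ Subgroup.comap (MulAut.conj g).toMonoidHom (sSup S) := by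
    refine sSup_le fun N hN => le_trans ?_ (Subgroup.comap_mono (le_sSup hN))
    intro n hn
    exact Subgroup.mem_comap.2 (by simpa using (hS N hN).conj_mem n hn g)
  simpa using h hx

/-- The upper η-series: `η₀ = 1`, and `η_{i+1}/η_i = η(G/η_i)` is the product of all
powerfully embedded subgroups of `G/η_i`. -/
def etaUp (p : ℕ) (G : Type*) [Group G] : ℕ → Subgroup G
  | 0 => ⊥
  | i + 1 => sSup {N : Subgroup G | N.Normal ∧ ⁅N, (⊤ : Subgroup G)⁆ ≤ pPow p N ⊔ etaUp p G i}

instance etaUp_normal (p : ℕ) (G : Type*) [Group G] (i : ℕ) : (etaUp p G i).Normal := by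
  cases i with
  | zero => show (⊥ : Subgroup G).Normal; infer_instance
  | succ i => exact normal_sSup fun N hN => hN.1

/-- The powerful class of `G`. -/
noncomputable def pwc (p : ℕ) (G : Type*) [Group G] : ℕ := sInf {k | etaUp p G k = ⊤}

/-- Iterated commutator `[N, G, G, ..., G]` with `i` copies of `G`. -/
def itComm {G : Type*} [Group G] (N : Subgroup G) : ℕ → Subgroup G
  | 0 => N
  | i + 1 => ⁅itComm N i, (⊤ : Subgroup G)⁆

/-- `N` is PF-embedded in `G`: it admits a potent filtration. -/
def PFEmbedded {G : Type*} [Group G] (p : ℕ) (N : Subgroup G) : Prop :=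
  ∃ (s : ℕ) (M : ℕ → Subgroup G), M 0 = N ∧ M s = ⊥ ∧
    (∀ i, M (i + 1) ≤ M i) ∧ (∀ i, (M i).Normal) ∧
    (∀ i, ⁅M i, (⊤ : Subgroup G)⁆ ≤ M (i + 1)) ∧
    (∀ i, itComm (M i) (p - 1) ≤ pPow p (M (i + 1)))

instance instK (p : ℕ) (G : Type*) [Group G] (k : ℕ) :
    (pPow p (etaUp p G (k + 1)) ⊔ etaUp p G k).Normal :=
  @Subgroup.sup_normal _ _ _ _ (pPow_normal p (etaUp_normal p G (k + 1))) (etaUp_normal p G k)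

theorem pPow_mono {G : Type*} [Group G] (p : ℕ) {N M : Subgroup G} (h : N ≤ M) :
    pPow p N ≤ pPow p M :=
  Subgroup.closure_mono (Set.image_mono h)

theorem etaUp_succ_def (p : ℕ) (G : Type*) [Group G] (i : ℕ) :
    etaUp p G (i + 1) =
      sSup {N : Subgroup G | N.Normal ∧ ⁅N, (⊤ : Subgroup G)⁆ ≤ pPow p N ⊔ etaUp p G i} :=
  rfl

open scoped commutatorElement

/-- `η_{k+1}(G)/(η_{k+1}(G)^p η_k(G)) = Z(G/(η_{k+1}(G)^p η_k(G)))`. -/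
theorem etaSucc_mod_eq_center {p : ℕ} (hp : p.Prime) (hodd : Odd p)
    {G : Type*} [Group G] [Finite G] (hG : IsPGroup p G) (k : ℕ) :
    Subgroup.map (QuotientGroup.mk' (pPow p (etaUp p G (k + 1)) ⊔ etaUp p G k))
        (etaUp p G (k + 1)) =
      Subgroup.center (G ⧸ (pPow p (etaUp p G (k + 1)) ⊔ etaUp p G k)) := by
  set K := pPow p (etaUp p G (k + 1)) ⊔ etaUp p G k with hKdef
  set Z' := Subgroup.comap (QuotientGroup.mk' K) (Subgroup.center (G ⧸ K)) with hZdef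
  have hker : (QuotientGroup.mk' K).ker = K := QuotientGroup.ker_mk' K
  have hsub : etaUp p G (k + 1) ≤ Z' := by
    rw [etaUp_succ_def]
    refine sSup_le fun N hN => ?_
    have hNle : N ≤ etaUp p G (k + 1) := by
      rw [etaUp_succ_def]; exact le_sSup hN
    have hcomm : ⁅N, (⊤ : Subgroup G)⁆ ≤ K :=
      hN.2.trans (sup_le_sup_right (pPow_mono p hNle) _)
    intro n hn
    simp only [hZdef, Subgroup.mem_comap]
    rw [Subgroup.mem_center_iff]
    intro q
    obtain ⟨g, rfl⟩ := QuotientGroup.mk'_surjective K q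
    have hc : ⁅n, g⁆ ∈ K :=
      hcomm (Subgroup.commutator_mem_commutator hn (Subgroup.mem_top _))
    have h1 : ⁅(QuotientGroup.mk' K) n, (QuotientGroup.mk' K) g⁆ = 1 := by
      rw [← map_commutatorElement]
      rw [← hker] at hc
      exact hc
    exact (commutatorElement_eq_one_iff_mul_comm.mp h1).symm
  have hZcomm : ⁅Z', (⊤ : Subgroup G)⁆ ≤ K := by
    rw [Subgroup.commutator_le]
    intro z hz g _
    have hz' : (QuotientGroup.mk' K) z ∈ Subgroup.center (G ⧸ K) := hz
    have hcz : (QuotientGroup.mk' K) z * (QuotientGroup.mk' K) g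
        = (QuotientGroup.mk' K) g * (QuotientGroup.mk' K) z :=
      (Subgroup.mem_center_iff.mp hz' _).symm
    rw [← hker, MonoidHom.mem_ker, map_commutatorElement]
    exact commutatorElement_eq_one_iff_mul_comm.mpr hcz
  have hZmem : Z' ≤ etaUp p G (k + 1) := by
    rw [etaUp_succ_def]
    refine le_sSup ⟨Subgroup.Normal.comap inferInstance _, ?_⟩
    exact hZcomm.trans (sup_le_sup_right (pPow_mono p hsub) _)
  have hEq : etaUp p G (k + 1) = Z' := le_antisymm hsub hZmem
  show Subgroup.map (QuotientGroup.mk' K) (etaUp p G (k + 1)) = Subgroup.center (G ⧸ K)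
  rw [hEq, hZdef]
  exact Subgroup.map_comap_eq_self_of_surjective (QuotientGroup.mk'_surjective K) _
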